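/- Let f, g, h : ℝ^n × ℝ^n → ℂ be smooth and ℤ^{2n}-periodic. Then for every integer N ≥ 0, Σ_{a+b=N, a,b≥0} C_a(C_b(f,g), h) = Σ_{a+b=N, a,b≥0} C_a(f, C_b(g,h)). (This is the associativity, order by order in ℏ, of the star product f ⋆ g = Σ_j ℏ^j C_j(f,g).) -/

import Mathlib

open MeasureTheory Complex
open scoped Real

noncomputable section

/-- The unit box `[0,1]^n` in `ℝ^n`. -/
def box (n : ℕ) : Set (Fin n → ℝ) := Set.univ.pi fun _ => Set.Icc (0:ℝ) 1

/-- `ℤ^{2n}`-periodicity of a function `f(x,y)` on `ℝ^n × ℝ^n`. -/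
def IsPeriodic2 (n : ℕ) (f : (Fin n → ℝ) × (Fin n → ℝ) → ℂ) : Prop :=
  ∀ (x y : Fin n → ℝ) (a b : Fin n → ℤ),
    f (x + fun i => (a i : ℝ), y + fun i => (b i : ℝ)) = f (x, y)

/-- The `m`-th fibrewise Fourier coefficient
`f̂_m(y) = ∫_{[0,1]^n} f(x,y) e^{-2π√-1 m·x} dx`. -/
def fhat (n : ℕ) (f : (Fin n → ℝ) × (Fin n → ℝ) → ℂ) (m : Fin n → ℤ) (y : Fin n → ℝ) : ℂ :=
  ∫ x in box n, f (x, y) * Complex.exp (-2 * π * Complex.I * ∑ i, (m i : ℂ) * (x i : ℂ))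

/-- `N_m = ∏_{i : m_i ≠ 0} 1/(2π√-1 m_i)`. -/
def Nm (n : ℕ) (m : Fin n → ℤ) : ℂ :=
  ∏ i ∈ Finset.univ.filter (fun i => m i ≠ 0), (1 / (2 * π * Complex.I * (m i : ℂ)))
/-- Partial derivative `∂/∂x^i` of a function `f(x,y)` on `ℝ^n × ℝ^n`. -/
def pderivX (n : ℕ) (i : Fin n) (f : (Fin n → ℝ) × (Fin n → ℝ) → ℂ) :
    (Fin n → ℝ) × (Fin n → ℝ) → ℂ :=
  fun p => fderiv ℝ f p (Pi.single i (1:ℝ), 0)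

/-- Partial derivative `∂/∂y^i` of a function `f(x,y)` on `ℝ^n × ℝ^n`. -/
def pderivY (n : ℕ) (i : Fin n) (f : (Fin n → ℝ) × (Fin n → ℝ) → ℂ) :
    (Fin n → ℝ) × (Fin n → ℝ) → ℂ :=
  fun p => fderiv ℝ f p (0, Pi.single i (1:ℝ))

/-- Iterated `x`-derivative `∂^j/∂x^{i_1}⋯∂x^{i_j}` along a list of indices. -/
def derivX (n : ℕ) (l : List (Fin n)) (f : (Fin n → ℝ) × (Fin n → ℝ) → ℂ) :
    (Fin n → ℝ) × (Fin n → ℝ) → ℂ :=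
  l.foldr (pderivX n) f

/-- Iterated `y`-derivative `∂^j/∂y^{i_1}⋯∂y^{i_j}` along a list of indices. -/
def derivY (n : ℕ) (l : List (Fin n)) (f : (Fin n → ℝ) × (Fin n → ℝ) → ℂ) :
    (Fin n → ℝ) × (Fin n → ℝ) → ℂ :=
  l.foldr (pderivY n) f

/-- `C_j(f,g) = (1/(j!·(2π√-1)^j)) Σ_{i_1,…,i_j} (∂^j f/∂y^{i_1}⋯∂y^{i_j})
(∂^j g/∂x^{i_1}⋯∂x^{i_j})`. -/
def Cop (n j : ℕ) (f g : (Fin n → ℝ) × (Fin n → ℝ) → ℂ) :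
    (Fin n → ℝ) × (Fin n → ℝ) → ℂ :=
  fun p => (1 / ((Nat.factorial j : ℂ) * (2 * π * Complex.I) ^ j)) *
    ∑ v : Fin j → Fin n, derivY n (List.ofFn v) f p * derivX n (List.ofFn v) g p

/-- `Č_j(f,g) = ((√-1)^j/((2π)^j j!)) Σ_{i_1,…,i_j} (∂^j f/∂x^{i_1}⋯∂x^{i_j})
(∂^j g/∂y^{i_1}⋯∂y^{i_j})`. -/
def CopCheck (n j : ℕ) (f g : (Fin n → ℝ) × (Fin n → ℝ) → ℂ) :
    (Fin n → ℝ) × (Fin n → ℝ) → ℂ :=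
  fun p => (Complex.I ^ j / ((2 * (π : ℂ)) ^ j * (Nat.factorial j : ℂ))) *
    ∑ v : Fin j → Fin n, derivX n (List.ofFn v) f p * derivY n (List.ofFn v) g p


section StarAux

abbrev EE (n : ℕ) := (Fin n → ℝ) × (Fin n → ℝ)

def dd (n : ℕ) (v : EE n) (f : EE n → ℂ) : EE n → ℂ := fun p => fderiv ℝ f p v

variable {n : ℕ}

lemma ContDiff.dd {f : EE n → ℂ} (hf : ContDiff ℝ (⊤:ℕ∞) f) (v : EE n) :
    ContDiff ℝ (⊤:ℕ∞) (dd n v f) :=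
  (hf.fderiv_right (m := (⊤:ℕ∞)) (by simp)).clm_apply contDiff_const

lemma dd_comm {f : EE n → ℂ} (hf : ContDiff ℝ (⊤:ℕ∞) f) (u v : EE n) :
    dd n u (dd n v f) = dd n v (dd n u f) := by
  funext p
  have hsym : IsSymmSndFDerivAt ℝ f p :=
    hf.contDiffAt.isSymmSndFDerivAt (by rw [minSmoothness_of_isRCLikeNormedField]; exact WithTop.coe_le_coe.mpr (le_top : (2:ℕ∞) ≤ ⊤))
  have hd : DifferentiableAt ℝ (fderiv ℝ f) p :=
    ((hf.fderiv_right (m := (⊤:ℕ∞)) (by simp)).differentiable (by norm_cast)) p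
  have e1 : ∀ w : EE n, fderiv ℝ (fun q => fderiv ℝ f q w) p
      = (fderiv ℝ (fderiv ℝ f) p).flip w := by
    intro w
    have := fderiv_clm_apply (c := fderiv ℝ f) (u := fun _ => w) hd (differentiableAt_const w)
    simpa using this
  show fderiv ℝ (fun q => fderiv ℝ f q v) p u = fderiv ℝ (fun q => fderiv ℝ f q u) p v
  rw [e1 v, e1 u]
  simpa using hsym u v

lemma dd_mul {φ ψ : EE n → ℂ} (hφ : ContDiff ℝ (⊤:ℕ∞) φ) (hψ : ContDiff ℝ (⊤:ℕ∞) ψ)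
    (v : EE n) (p : EE n) :
    dd n v (fun q => φ q * ψ q) p = dd n v φ p * ψ p + φ p * dd n v ψ p := by
  have h1 : DifferentiableAt ℝ φ p := (hφ.differentiable (by norm_cast)) p
  have h2 : DifferentiableAt ℝ ψ p := (hψ.differentiable (by norm_cast)) p
  show fderiv ℝ (fun q => φ q * ψ q) p v = _
  rw [fderiv_fun_mul h1 h2]
  simp only [ContinuousLinearMap.add_apply, ContinuousLinearMap.smul_apply, smul_eq_mul, dd]
  ring

lemma dd_sum {ι : Type*} (s : Finset ι) (F : ι → EE n → ℂ)
    (hF : ∀ i ∈ s, ContDiff ℝ (⊤:ℕ∞) (F i)) (v : EE n) :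
    dd n v (fun p => ∑ i ∈ s, F i p) = fun p => ∑ i ∈ s, dd n v (F i) p := by
  funext p
  show fderiv ℝ (fun q => ∑ i ∈ s, F i q) p v = _
  rw [fderiv_fun_sum (fun i hi => ((hF i hi).differentiable (by norm_cast)) p)]
  simp [dd]

lemma dd_const_mul {φ : EE n → ℂ} (hφ : ContDiff ℝ (⊤:ℕ∞) φ) (c : ℂ) (v : EE n) :
    dd n v (fun p => c * φ p) = fun p => c * dd n v φ p := by
  funext p
  show fderiv ℝ (fun q => c * φ q) p v = _
  rw [fderiv_const_mul ((hφ.differentiable (by norm_cast)) p)]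
  simp [dd]

/-- Iterated directional derivative along a list of indices using direction family `e`. -/
def ddL (n : ℕ) (e : Fin n → EE n) (l : List (Fin n)) (f : EE n → ℂ) : EE n → ℂ :=
  l.foldr (fun i => dd n (e i)) f

@[simp] lemma ddL_nil (e : Fin n → EE n) (f : EE n → ℂ) : ddL n e [] f = f := rfl

@[simp] lemma ddL_cons (e : Fin n → EE n) (i : Fin n) (l : List (Fin n)) (f : EE n → ℂ) :
    ddL n e (i :: l) f = dd n (e i) (ddL n e l f) := rfl

lemma ddL_append (e : Fin n → EE n) (l l' : List (Fin n)) (f : EE n → ℂ) :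
    ddL n e (l ++ l') f = ddL n e l (ddL n e l' f) := by
  simp [ddL, List.foldr_append]

lemma ContDiff.ddL {f : EE n → ℂ} (hf : ContDiff ℝ (⊤:ℕ∞) f) (e : Fin n → EE n)
    (l : List (Fin n)) : ContDiff ℝ (⊤:ℕ∞) (ddL n e l f) := by
  induction l with
  | nil => exact hf
  | cons i l ih => exact ih.dd _

lemma ddL_dd_comm {f : EE n → ℂ} (hf : ContDiff ℝ (⊤:ℕ∞) f) (e : Fin n → EE n)
    (l : List (Fin n)) (v : EE n) :
    ddL n e l (dd n v f) = dd n v (ddL n e l f) := by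
  induction l with
  | nil => rfl
  | cons i l ih =>
    rw [ddL_cons, ddL_cons, ih, dd_comm (hf.ddL e l) (e i) v]

lemma ddL_ddL_comm {f : EE n → ℂ} (hf : ContDiff ℝ (⊤:ℕ∞) f) (e e' : Fin n → EE n)
    (l l' : List (Fin n)) :
    ddL n e l (ddL n e' l' f) = ddL n e' l' (ddL n e l f) := by
  induction l with
  | nil => rfl
  | cons i l ih =>
    rw [ddL_cons, ih, ddL_cons, ddL_dd_comm (hf.ddL e l) e' l' (e i)]

lemma ddL_perm {f : EE n → ℂ} (hf : ContDiff ℝ (⊤:ℕ∞) f) (e : Fin n → EE n)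
    {l l' : List (Fin n)} (hp : l.Perm l') :
    ddL n e l f = ddL n e l' f := by
  induction hp with
  | nil => rfl
  | cons x _ ih => rw [ddL_cons, ddL_cons, ih]
  | swap x y l =>
    rw [ddL_cons, ddL_cons, ddL_cons, ddL_cons, dd_comm (hf.ddL e l) (e y) (e x)]
  | trans _ _ ih1 ih2 => rw [ih1, ih2]

lemma ddL_sum {ι : Type*} (s : Finset ι) (F : ι → EE n → ℂ)
    (hF : ∀ i ∈ s, ContDiff ℝ (⊤:ℕ∞) (F i)) (e : Fin n → EE n) (l : List (Fin n)) :
    ddL n e l (fun p => ∑ i ∈ s, F i p) = fun p => ∑ i ∈ s, ddL n e l (F i) p := by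
  induction l with
  | nil => rfl
  | cons j l ih =>
    rw [ddL_cons, ih]
    exact dd_sum s _ (fun i hi => (hF i hi).ddL e l) (e j)

lemma ddL_const_mul {φ : EE n → ℂ} (hφ : ContDiff ℝ (⊤:ℕ∞) φ) (c : ℂ) (e : Fin n → EE n)
    (l : List (Fin n)) :
    ddL n e l (fun p => c * φ p) = fun p => c * ddL n e l φ p := by
  induction l with
  | nil => rfl
  | cons j l ih =>
    rw [ddL_cons, ih]
    exact dd_const_mul (hφ.ddL e l) c (e j)

/-- The sublist of values `v i` for indices with `s i = b`. -/
def mask (a : ℕ) (v : Fin a → Fin n) (s : Fin a → Bool) (b : Bool) : List (Fin n) :=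
  ((List.finRange a).filter (fun i => s i == b)).map v

@[simp] lemma mask_zero (v : Fin 0 → Fin n) (s : Fin 0 → Bool) (b : Bool) :
    mask 0 v s b = [] := rfl

lemma mask_succ (a : ℕ) (v : Fin (a+1) → Fin n) (s : Fin (a+1) → Bool) (b : Bool) :
    mask (a+1) v s b = (if s 0 == b then [v 0] else [])
      ++ mask a (fun i => v i.succ) (fun i => s i.succ) b := by
  simp only [mask, List.finRange_succ, List.filter_cons, List.filter_map,
    Function.comp_def, List.map_map]
  by_cases h : s 0 == b <;> simp [h]

lemma mask_perm (a : ℕ) (v : Fin a → Fin n) (s : Fin a → Bool) :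
    (mask a v s true ++ mask a v s false).Perm (List.ofFn v) := by
  rw [List.ofFn_eq_map, mask, mask, ← List.map_append]
  refine List.Perm.map v ?_
  have : (fun i : Fin a => s i == false) = fun i => !(s i == true) := by
    funext i; cases s i <;> rfl
  rw [this]
  exact List.filter_append_perm _ _

lemma ofFn_cons (a : ℕ) (i : Fin n) (u : Fin a → Fin n) :
    List.ofFn (Fin.cons i u) = i :: List.ofFn u := by
  simp [List.ofFn_succ]

lemma ddL_leibniz (e : Fin n → EE n) {φ ψ : EE n → ℂ}
    (hφ : ContDiff ℝ (⊤:ℕ∞) φ) (hψ : ContDiff ℝ (⊤:ℕ∞) ψ) :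
    ∀ (a : ℕ) (v : Fin a → Fin n),
    ddL n e (List.ofFn v) (fun p => φ p * ψ p)
      = fun p => ∑ s : Fin a → Bool,
          ddL n e (mask a v s true) φ p * ddL n e (mask a v s false) ψ p := by
  intro a
  induction a with
  | zero =>
    intro v
    funext p
    simp [Finset.sum_fin_eq_sum_range]
  | succ a ih =>
    intro v
    have h0 : List.ofFn v = v 0 :: List.ofFn (fun i => v i.succ) := List.ofFn_succ
    rw [h0, ddL_cons, ih (fun i => v i.succ)]
    funext p
    rw [dd_sum _ _ (fun s _ => ((hφ.ddL e _).mul (hψ.ddL e _))) (e (v 0))]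
    have reidx :
        (∑ s : Fin (a+1) → Bool,
          ddL n e (mask (a+1) v s true) φ p * ddL n e (mask (a+1) v s false) ψ p)
        = ∑ cs : Bool × (Fin a → Bool),
          ddL n e (mask (a+1) v (Fin.cons cs.1 cs.2) true) φ p *
            ddL n e (mask (a+1) v (Fin.cons cs.1 cs.2) false) ψ p := by
      exact (Fintype.sum_equiv (Fin.consEquiv fun _ => Bool) _ _ (fun cs => rfl)).symm
    rw [reidx, Fintype.sum_prod_type, Fintype.sum_bool]
    rw [← Finset.sum_add_distrib]
    refine Finset.sum_congr rfl (fun s _ => ?_)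
    have e1 : ∀ b, mask (a+1) v (Fin.cons true s) b
        = (if b then [v 0] else []) ++ mask a (fun i => v i.succ) s b := by
      intro b; rw [mask_succ]; cases b <;> simp
    have e2 : ∀ b, mask (a+1) v (Fin.cons false s) b
        = (if b then [] else [v 0]) ++ mask a (fun i => v i.succ) s b := by
      intro b; rw [mask_succ]; cases b <;> simp
    rw [e1 true, e1 false, e2 true, e2 false]
    simp only [if_true, if_false, Bool.false_eq_true, Bool.true_eq_false, ite_false, ite_true,
      List.singleton_append, List.nil_append, ddL_cons]
    rw [dd_mul (hφ.ddL e _) (hψ.ddL e _) (e (v 0)) p]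

lemma sum_fun_succ {β M : Type*} [Fintype β] [AddCommMonoid M] (m : ℕ)
    (G : (Fin (m+1) → β) → M) :
    (∑ v : Fin (m+1) → β, G v) = ∑ i : β, ∑ v : Fin m → β, G (Fin.cons i v) := by
  have h := Fintype.sum_equiv (Fin.consEquiv fun _ => β)
    (fun x : β × (Fin m → β) => G (Fin.cons x.1 x.2)) G (fun x => rfl)
  rw [← h, Fintype.sum_prod_type]

lemma pascal (a : ℕ) (T : ℕ → ℕ → ℂ) :
    ∑ jk ∈ Finset.HasAntidiagonal.antidiagonal a, (a.choose jk.1 : ℂ) * (T (jk.1+1) jk.2 + T jk.1 (jk.2+1))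
    = ∑ jk ∈ Finset.HasAntidiagonal.antidiagonal (a+1), ((a+1).choose jk.1 : ℂ) * T jk.1 jk.2 := by
  have hU1 : (∑ jk ∈ Finset.HasAntidiagonal.antidiagonal (a+1), (a.choose jk.1 : ℂ) * T jk.1 jk.2)
      = (a.choose 0 : ℂ) * T 0 (a+1)
        + ∑ jk ∈ Finset.HasAntidiagonal.antidiagonal a, (a.choose (jk.1+1) : ℂ) * T (jk.1+1) jk.2 :=
    Finset.Nat.sum_antidiagonal_succ
  have hU2 : (∑ jk ∈ Finset.HasAntidiagonal.antidiagonal (a+1), (a.choose jk.1 : ℂ) * T jk.1 jk.2)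
      = (a.choose (a+1) : ℂ) * T (a+1) 0
        + ∑ jk ∈ Finset.HasAntidiagonal.antidiagonal a, (a.choose jk.1 : ℂ) * T jk.1 (jk.2+1) :=
    Finset.Nat.sum_antidiagonal_succ'
  have hkey : (∑ jk ∈ Finset.HasAntidiagonal.antidiagonal a, (a.choose jk.1 : ℂ) * T jk.1 (jk.2+1))
      = (T 0 (a+1)
        + ∑ jk ∈ Finset.HasAntidiagonal.antidiagonal a, (a.choose (jk.1+1) : ℂ) * T (jk.1+1) jk.2) := by
    have := hU2.symm.trans hU1
    simp only [Nat.choose_succ_self, Nat.cast_zero, zero_mul, zero_add, Nat.choose_zero_right,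
      Nat.cast_one, one_mul] at this
    exact this
  have hR : (∑ jk ∈ Finset.HasAntidiagonal.antidiagonal (a+1), ((a+1).choose jk.1 : ℂ) * T jk.1 jk.2)
      = ((a+1).choose 0 : ℂ) * T 0 (a+1)
        + ∑ jk ∈ Finset.HasAntidiagonal.antidiagonal a, ((a+1).choose (jk.1+1) : ℂ) * T (jk.1+1) jk.2 :=
    Finset.Nat.sum_antidiagonal_succ
  have expand : ∀ jk : ℕ × ℕ, ((a+1).choose (jk.1+1) : ℂ) * T (jk.1+1) jk.2
      = (a.choose jk.1 : ℂ) * T (jk.1+1) jk.2 + (a.choose (jk.1+1) : ℂ) * T (jk.1+1) jk.2 := by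
    intro jk
    rw [Nat.choose_succ_succ]
    push_cast
    ring
  rw [hR, Finset.sum_congr rfl (fun jk _ => expand jk), Finset.sum_add_distrib]
  simp only [Nat.choose_zero_right, Nat.cast_one, one_mul, mul_add]
  rw [Finset.sum_add_distrib, hkey]
  ring

lemma count (a : ℕ) (F : List (Fin n) → List (Fin n) → ℂ) :
    (∑ v : Fin a → Fin n, ∑ s : Fin a → Bool, F (mask a v s true) (mask a v s false))
    = ∑ jk ∈ Finset.HasAntidiagonal.antidiagonal a, (a.choose jk.1 : ℂ) *
        ∑ u : Fin jk.1 → Fin n, ∑ w : Fin jk.2 → Fin n, F (List.ofFn u) (List.ofFn w) := by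
  induction a generalizing F with
  | zero =>
    simp [Finset.Nat.antidiagonal_zero]
  | succ a ih =>
    rw [sum_fun_succ a (fun v => ∑ s : Fin (a+1) → Bool,
      F (mask (a+1) v s true) (mask (a+1) v s false))]
    have step1 : ∀ i : Fin n, (∑ v : Fin a → Fin n, ∑ s : Fin (a+1) → Bool,
          F (mask (a+1) (Fin.cons i v) s true) (mask (a+1) (Fin.cons i v) s false))
        = (∑ v : Fin a → Fin n, ∑ s : Fin a → Bool,
            (F (i :: mask a v s true) (mask a v s false)
              + F (mask a v s true) (i :: mask a v s false))) := by
      intro i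
      refine Finset.sum_congr rfl (fun v _ => ?_)
      rw [sum_fun_succ a (fun s => F (mask (a+1) (Fin.cons i v) s true)
        (mask (a+1) (Fin.cons i v) s false)), Fintype.sum_bool, ← Finset.sum_add_distrib]
      refine Finset.sum_congr rfl (fun s _ => ?_)
      have m1 : ∀ (c : Bool) (b : Bool), mask (a+1) (Fin.cons i v) (Fin.cons c s) b
          = (if c == b then [i] else []) ++ mask a v s b := by
        intro c b; rw [mask_succ]; simp
      rw [m1, m1, m1, m1]
      simp
    simp only [step1]
    have step2 : ∀ i : Fin n,
        (∑ v : Fin a → Fin n, ∑ s : Fin a → Bool,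
            (F (i :: mask a v s true) (mask a v s false)
              + F (mask a v s true) (i :: mask a v s false)))
        = (∑ jk ∈ Finset.HasAntidiagonal.antidiagonal a, (a.choose jk.1 : ℂ) *
            ∑ u : Fin jk.1 → Fin n, ∑ w : Fin jk.2 → Fin n,
              (F (i :: List.ofFn u) (List.ofFn w) + F (List.ofFn u) (i :: List.ofFn w))) :=
      fun i => ih (fun x y => F (i :: x) y + F x (i :: y))
    simp only [step2]
    rw [Finset.sum_comm]
    have step3 : ∀ jk ∈ Finset.HasAntidiagonal.antidiagonal a,
        (∑ i : Fin n, (a.choose jk.1 : ℂ) *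
            ∑ u : Fin jk.1 → Fin n, ∑ w : Fin jk.2 → Fin n,
              (F (i :: List.ofFn u) (List.ofFn w) + F (List.ofFn u) (i :: List.ofFn w)))
        = (a.choose jk.1 : ℂ) *
            ((∑ u : Fin (jk.1+1) → Fin n, ∑ w : Fin jk.2 → Fin n, F (List.ofFn u) (List.ofFn w))
              + ∑ u : Fin jk.1 → Fin n, ∑ w : Fin (jk.2+1) → Fin n,
                  F (List.ofFn u) (List.ofFn w)) := by
      intro jk _
      rw [← Finset.mul_sum]
      congr 1
      rw [sum_fun_succ jk.1 (fun u => ∑ w : Fin jk.2 → Fin n, F (List.ofFn u) (List.ofFn w))]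
      have h2 : (∑ u : Fin jk.1 → Fin n, ∑ w : Fin (jk.2+1) → Fin n,
          F (List.ofFn u) (List.ofFn w))
          = ∑ i : Fin n, ∑ u : Fin jk.1 → Fin n, ∑ w : Fin jk.2 → Fin n,
              F (List.ofFn u) (i :: List.ofFn w) := by
        have h2a : ∀ u : Fin jk.1 → Fin n,
            (∑ w : Fin (jk.2+1) → Fin n, F (List.ofFn u) (List.ofFn w))
            = ∑ i : Fin n, ∑ w : Fin jk.2 → Fin n, F (List.ofFn u) (i :: List.ofFn w) := by
          intro u
          rw [sum_fun_succ jk.2 (fun w => F (List.ofFn u) (List.ofFn w))]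
          refine Finset.sum_congr rfl (fun i _ => Finset.sum_congr rfl (fun w _ => ?_))
          rw [ofFn_cons]
        rw [Finset.sum_congr rfl (fun u _ => h2a u)]
        exact Finset.sum_comm
      rw [h2, ← Finset.sum_add_distrib]
      refine Finset.sum_congr rfl (fun i _ => ?_)
      rw [← Finset.sum_add_distrib]
      refine Finset.sum_congr rfl (fun u _ => ?_)
      rw [← Finset.sum_add_distrib]
      refine Finset.sum_congr rfl (fun w _ => ?_)
      rw [ofFn_cons]
    rw [Finset.sum_congr rfl step3]
    exact pascal a (fun j k => ∑ u : Fin j → Fin n, ∑ w : Fin k → Fin n,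
      F (List.ofFn u) (List.ofFn w))

def eX (n : ℕ) : Fin n → EE n := fun i => (Pi.single i (1:ℝ), 0)
def eY (n : ℕ) : Fin n → EE n := fun i => (0, Pi.single i (1:ℝ))
def cC (j : ℕ) : ℂ := 1 / ((Nat.factorial j : ℂ) * (2 * π * Complex.I) ^ j)

lemma cop_eq (n j : ℕ) (f g : EE n → ℂ) : Cop n j f g = fun p => cC j *
    ∑ v : Fin j → Fin n, ddL n (eY n) (List.ofFn v) f p * ddL n (eX n) (List.ofFn v) g p := rfl

lemma cyc (N : ℕ) (G : ℕ → ℕ → ℕ → ℂ) :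
    (∑ ab ∈ Finset.HasAntidiagonal.antidiagonal N, ∑ jk ∈ Finset.HasAntidiagonal.antidiagonal ab.1, G jk.1 jk.2 ab.2)
    = ∑ ab ∈ Finset.HasAntidiagonal.antidiagonal N, ∑ jk ∈ Finset.HasAntidiagonal.antidiagonal ab.1, G jk.2 ab.2 jk.1 := by
  rw [Finset.sum_sigma', Finset.sum_sigma']
  refine Finset.sum_nbij' (fun x => ⟨(x.1.2 + x.2.1, x.2.2), (x.1.2, x.2.1)⟩)
    (fun y => ⟨(y.2.2 + y.1.2, y.2.1), (y.2.2, y.1.2)⟩) ?_ ?_ ?_ ?_ ?_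
  · rintro ⟨⟨a, b⟩, ⟨j, k⟩⟩ hx
    simp only [Finset.mem_sigma, Finset.HasAntidiagonal.mem_antidiagonal] at hx ⊢
    exact ⟨by omega, trivial⟩
  · rintro ⟨⟨A, B⟩, ⟨J, K⟩⟩ hy
    simp only [Finset.mem_sigma, Finset.HasAntidiagonal.mem_antidiagonal] at hy ⊢
    exact ⟨by omega, trivial⟩
  · rintro ⟨⟨a, b⟩, ⟨j, k⟩⟩ hx
    simp only [Finset.mem_sigma, Finset.HasAntidiagonal.mem_antidiagonal] at hx
    simp only [Sigma.mk.inj_iff, Prod.mk.injEq, heq_eq_eq]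
    exact ⟨⟨by omega, trivial⟩, trivial⟩
  · rintro ⟨⟨A, B⟩, ⟨J, K⟩⟩ hy
    simp only [Finset.mem_sigma, Finset.HasAntidiagonal.mem_antidiagonal] at hy
    simp only [Sigma.mk.inj_iff, Prod.mk.injEq, heq_eq_eq]
    exact ⟨⟨by omega, trivial⟩, trivial⟩
  · rintro ⟨⟨a, b⟩, ⟨j, k⟩⟩ _
    rfl

def KK (N j k b : ℕ) : ℂ :=
  1 / ((Nat.factorial j : ℂ) * (Nat.factorial k) * (Nat.factorial b) * (2 * π * Complex.I) ^ N)

lemma KK_cyc (N j k b : ℕ) : KK N j k b = KK N k b j := by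
  rw [KK, KK]
  ring_nf

lemma coeff (N a b j k : ℕ) (hab : a + b = N) (hjk : j + k = a) :
    cC a * cC b * (a.choose j : ℂ) = KK N j k b := by
  have hkey : (a.choose j) * j.factorial * k.factorial = a.factorial := by
    have hk : k = a - j := by omega
    subst hk
    exact Nat.choose_mul_factorial_mul_factorial (by omega)
  have hN : (2 * (π:ℂ) * Complex.I) ^ a * (2 * (π:ℂ) * Complex.I) ^ b
      = (2 * (π:ℂ) * Complex.I) ^ N := by rw [← pow_add, hab]
  have hπ : (2 * (π:ℂ) * Complex.I) ≠ 0 := by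
    simp [Real.pi_ne_zero, Complex.I_ne_zero, Complex.ofReal_ne_zero]
  have hfac : ∀ m : ℕ, ((Nat.factorial m : ℂ)) ≠ 0 := fun m =>
    Nat.cast_ne_zero.mpr (Nat.factorial_ne_zero m)
  have hkeyC : (a.choose j : ℂ) * (Nat.factorial j) * (Nat.factorial k)
      = (Nat.factorial a) := by exact_mod_cast congrArg (Nat.cast : ℕ → ℂ) hkey
  have hABne : ((Nat.factorial a : ℂ) * (2 * ↑π * Complex.I) ^ a *
      ((Nat.factorial b : ℂ) * (2 * ↑π * Complex.I) ^ b)) ≠ 0 :=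
    mul_ne_zero (mul_ne_zero (hfac a) (pow_ne_zero a hπ))
      (mul_ne_zero (hfac b) (pow_ne_zero b hπ))
  have hDne : ((Nat.factorial j : ℂ) * (Nat.factorial k) * (Nat.factorial b) *
      (2 * ↑π * Complex.I) ^ N) ≠ 0 :=
    mul_ne_zero (mul_ne_zero (mul_ne_zero (hfac j) (hfac k)) (hfac b)) (pow_ne_zero N hπ)
  rw [cC, cC, KK, div_mul_div_comm, one_mul, one_div_mul_eq_div,
    div_eq_div_iff hABne hDne, one_mul, ← hN, ← hkeyC]
  ring

variable {n : ℕ}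

/-- The canonical trilinear term. -/
def Phi (n : ℕ) (f g h : EE n → ℂ) (p : EE n) (x y z : List (Fin n)) : ℂ :=
  ddL n (eY n) (x ++ z) f p * ddL n (eY n) y (ddL n (eX n) z g) p *
    ddL n (eX n) (x ++ y) h p

lemma expandL {f g h : EE n → ℂ} (hf : ContDiff ℝ (⊤:ℕ∞) f) (hg : ContDiff ℝ (⊤:ℕ∞) g)
    (hh : ContDiff ℝ (⊤:ℕ∞) h) (a b : ℕ) (p : EE n) :
    Cop n a (Cop n b f g) h p
      = cC a * cC b * ∑ jk ∈ Finset.HasAntidiagonal.antidiagonal a, (a.choose jk.1 : ℂ) *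
          ∑ u : Fin jk.1 → Fin n, ∑ v : Fin jk.2 → Fin n, ∑ w : Fin b → Fin n,
            Phi n f g h p (List.ofFn u) (List.ofFn v) (List.ofFn w) := by
  classical
  set Fab : List (Fin n) → List (Fin n) → ℂ := fun x y =>
    ∑ w : Fin b → Fin n, Phi n f g h p x y (List.ofFn w) with hFab
  have hsm : ∀ w : Fin b → Fin n, ContDiff ℝ (⊤:ℕ∞)
      (fun q => ddL n (eY n) (List.ofFn w) f q * ddL n (eX n) (List.ofFn w) g q) :=
    fun w => (hf.ddL _ _).mul (hg.ddL _ _)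
  have key : ∀ v : Fin a → Fin n,
      ddL n (eY n) (List.ofFn v) (Cop n b f g) p * ddL n (eX n) (List.ofFn v) h p
      = cC b * ∑ s : Fin a → Bool, Fab (mask a v s true) (mask a v s false) := by
    intro v
    have e1 : ddL n (eY n) (List.ofFn v) (Cop n b f g)
        = fun q => cC b * ∑ w : Fin b → Fin n, ∑ s : Fin a → Bool,
            ddL n (eY n) (mask a v s true ++ List.ofFn w) f q *
            ddL n (eY n) (mask a v s false) (ddL n (eX n) (List.ofFn w) g) q := by
      rw [cop_eq, ddL_const_mul (ContDiff.sum (fun w _ => hsm w)) (cC b) (eY n) (List.ofFn v),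
        ddL_sum Finset.univ _ (fun w _ => hsm w) (eY n) (List.ofFn v)]
      funext q
      congr 1
      refine Finset.sum_congr rfl fun w _ => ?_
      rw [ddL_leibniz (eY n) (hf.ddL (eY n) (List.ofFn w)) (hg.ddL (eX n) (List.ofFn w)) a v]
      refine Finset.sum_congr rfl fun s _ => ?_
      rw [← ddL_append]
    rw [e1]
    rw [mul_assoc]
    congr 1
    rw [Finset.sum_comm, Finset.sum_mul]
    refine Finset.sum_congr rfl fun s _ => ?_
    rw [Finset.sum_mul]
    refine Finset.sum_congr rfl fun w _ => ?_
    rw [ddL_perm hh (eX n) (mask_perm a v s).symm]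
    rw [Phi]
  rw [cop_eq]
  simp only []
  rw [show (∑ v : Fin a → Fin n,
        ddL n (eY n) (List.ofFn v) (Cop n b f g) p * ddL n (eX n) (List.ofFn v) h p)
      = cC b * ∑ v : Fin a → Fin n, ∑ s : Fin a → Bool,
          Fab (mask a v s true) (mask a v s false) from by
    rw [Finset.mul_sum]
    exact Finset.sum_congr rfl fun v _ => key v]
  rw [count a Fab]
  ring

lemma expandR {f g h : EE n → ℂ} (hf : ContDiff ℝ (⊤:ℕ∞) f) (hg : ContDiff ℝ (⊤:ℕ∞) g)
    (hh : ContDiff ℝ (⊤:ℕ∞) h) (a b : ℕ) (p : EE n) :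
    Cop n a f (Cop n b g h) p
      = cC a * cC b * ∑ jk ∈ Finset.HasAntidiagonal.antidiagonal a, (a.choose jk.1 : ℂ) *
          ∑ u : Fin jk.1 → Fin n, ∑ v : Fin jk.2 → Fin n, ∑ w : Fin b → Fin n,
            Phi n f g h p (List.ofFn v) (List.ofFn w) (List.ofFn u) := by
  classical
  set Gab : List (Fin n) → List (Fin n) → ℂ := fun x y =>
    ∑ w : Fin b → Fin n, Phi n f g h p y (List.ofFn w) x with hGab
  have hsm : ∀ w : Fin b → Fin n, ContDiff ℝ (⊤:ℕ∞)
      (fun q => ddL n (eY n) (List.ofFn w) g q * ddL n (eX n) (List.ofFn w) h q) :=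
    fun w => (hg.ddL _ _).mul (hh.ddL _ _)
  have key : ∀ v : Fin a → Fin n,
      ddL n (eY n) (List.ofFn v) f p * ddL n (eX n) (List.ofFn v) (Cop n b g h) p
      = cC b * ∑ s : Fin a → Bool, Gab (mask a v s true) (mask a v s false) := by
    intro v
    have e1 : ddL n (eX n) (List.ofFn v) (Cop n b g h)
        = fun q => cC b * ∑ w : Fin b → Fin n, ∑ s : Fin a → Bool,
            ddL n (eX n) (mask a v s true) (ddL n (eY n) (List.ofFn w) g) q *
            ddL n (eX n) (mask a v s false ++ List.ofFn w) h q := by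
      rw [cop_eq, ddL_const_mul (ContDiff.sum (fun w _ => hsm w)) (cC b) (eX n) (List.ofFn v),
        ddL_sum Finset.univ _ (fun w _ => hsm w) (eX n) (List.ofFn v)]
      funext q
      congr 1
      refine Finset.sum_congr rfl fun w _ => ?_
      rw [ddL_leibniz (eX n) (hg.ddL (eY n) (List.ofFn w)) (hh.ddL (eX n) (List.ofFn w)) a v]
      refine Finset.sum_congr rfl fun s _ => ?_
      rw [← ddL_append]
    rw [e1]
    rw [mul_comm (ddL n (eY n) (List.ofFn v) f p), mul_assoc]
    congr 1
    rw [Finset.sum_comm, Finset.sum_mul]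
    refine Finset.sum_congr rfl fun s _ => ?_
    rw [Finset.sum_mul]
    refine Finset.sum_congr rfl fun w _ => ?_
    rw [ddL_perm hf (eY n) (mask_perm a v s).symm,
      ddL_perm hf (eY n)
        (List.perm_append_comm (l₁ := mask a v s true) (l₂ := mask a v s false)),
      ddL_ddL_comm hg (eX n) (eY n) (mask a v s true) (List.ofFn w), Phi]
    ring
  rw [cop_eq]
  simp only []
  rw [show (∑ v : Fin a → Fin n,
        ddL n (eY n) (List.ofFn v) f p * ddL n (eX n) (List.ofFn v) (Cop n b g h) p)
      = cC b * ∑ v : Fin a → Fin n, ∑ s : Fin a → Bool,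
          Gab (mask a v s true) (mask a v s false) from by
    rw [Finset.mul_sum]
    exact Finset.sum_congr rfl fun v _ => key v]
  rw [count a Gab]
  ring

end StarAux

/-- Order-by-order associativity of the star product `f ⋆ g = Σ_j ℏ^j C_j(f,g)`:
for smooth `ℤ^{2n}`-periodic `f, g, h` and every `N ≥ 0`,
`Σ_{a+b=N} C_a(C_b(f,g),h) = Σ_{a+b=N} C_a(f,C_b(g,h))`. -/
theorem statement13 (n : ℕ) (hn : 1 ≤ n) (f g h : (Fin n → ℝ) × (Fin n → ℝ) → ℂ)
    (hf : ContDiff ℝ (⊤ : ℕ∞) f) (hg : ContDiff ℝ (⊤ : ℕ∞) g)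
    (hh : ContDiff ℝ (⊤ : ℕ∞) h)
    (hperf : IsPeriodic2 n f) (hperg : IsPeriodic2 n g) (hperh : IsPeriodic2 n h) :
    ∀ (N : ℕ) (p : (Fin n → ℝ) × (Fin n → ℝ)),
      (∑ ab ∈ Finset.HasAntidiagonal.antidiagonal N, Cop n ab.1 (Cop n ab.2 f g) h p) =
        (∑ ab ∈ Finset.HasAntidiagonal.antidiagonal N, Cop n ab.1 f (Cop n ab.2 g h) p) := by
  intro N p
  classical
  have hL : ∀ ab ∈ Finset.HasAntidiagonal.antidiagonal N, Cop n ab.1 (Cop n ab.2 f g) h p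
      = ∑ jk ∈ Finset.HasAntidiagonal.antidiagonal ab.1, KK N jk.1 jk.2 ab.2 *
          ∑ u : Fin jk.1 → Fin n, ∑ v : Fin jk.2 → Fin n, ∑ w : Fin ab.2 → Fin n,
            Phi n f g h p (List.ofFn u) (List.ofFn v) (List.ofFn w) := by
    rintro ⟨a, b⟩ hab
    rw [expandL hf hg hh a b p, Finset.mul_sum]
    refine Finset.sum_congr rfl fun jk hjk => ?_
    rw [← mul_assoc, coeff N a b jk.1 jk.2 (Finset.HasAntidiagonal.mem_antidiagonal.mp hab)
      (Finset.HasAntidiagonal.mem_antidiagonal.mp hjk)]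
  have hR : ∀ ab ∈ Finset.HasAntidiagonal.antidiagonal N, Cop n ab.1 f (Cop n ab.2 g h) p
      = ∑ jk ∈ Finset.HasAntidiagonal.antidiagonal ab.1, KK N jk.2 ab.2 jk.1 *
          ∑ u : Fin jk.2 → Fin n, ∑ v : Fin ab.2 → Fin n, ∑ w : Fin jk.1 → Fin n,
            Phi n f g h p (List.ofFn u) (List.ofFn v) (List.ofFn w) := by
    rintro ⟨a, b⟩ hab
    rw [expandR hf hg hh a b p, Finset.mul_sum]
    refine Finset.sum_congr rfl fun jk hjk => ?_
    rw [← mul_assoc, coeff N a b jk.1 jk.2 (Finset.HasAntidiagonal.mem_antidiagonal.mp hab)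
      (Finset.HasAntidiagonal.mem_antidiagonal.mp hjk), KK_cyc]
    congr 1
    rw [Finset.sum_comm]
    exact Finset.sum_congr rfl fun v _ => Finset.sum_comm
  rw [Finset.sum_congr rfl hL, Finset.sum_congr rfl hR]
  exact cyc N (fun j k b => KK N j k b *
    ∑ u : Fin j → Fin n, ∑ v : Fin k → Fin n, ∑ w : Fin b → Fin n,
      Phi n f g h p (List.ofFn u) (List.ofFn v) (List.ofFn w))
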